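/- Let n ≥ 2 and let p = (1/n,…,1/n) be the uniform probability vector. Then for every f ∈ ℝⁿ and every ε ≥ 0, the worst-case expected cost over the budgeted uncertainty set satisfies V_b(ε; f) := max{Σᵢ qᵢ fᵢ : q ∈ Δₙ, qᵢ ≤ (1+ε)/n for all i} ≤ E_p(f) + √ε · √(V_p(f)). -/

import Mathlib

/-- for the uniform nominal distribution, the budgeted-uncertainty
worst-case expected cost satisfies `V_b(ε; f) ≤ E_p(f) + √ε √(V_p f)`. -/
theorem stmt13 (n : ℕ) (hn : 2 ≤ n) (f : Fin n → ℝ) (ε : ℝ) (hε : 0 ≤ ε) :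
    let E : ℝ := (1 / (n : ℝ)) * ∑ i, f i
    let V : ℝ := (1 / (n : ℝ)) * ∑ i, (f i - E) ^ 2
    sSup ((fun q : Fin n → ℝ => ∑ i, q i * f i) ''
        {q : Fin n → ℝ | (∑ i, q i = 1 ∧ ∀ i, 0 ≤ q i) ∧ ∀ i, q i ≤ (1 + ε) / n})
      ≤ E + Real.sqrt ε * Real.sqrt V := by
  intro E V
  have hn0 : (0:ℝ) < n := by
    have : 0 < n := by omega
    exact_mod_cast this
  have hEdef : E = (1 / (n : ℝ)) * ∑ i, f i := rfl
  have hVdef : V = (1 / (n : ℝ)) * ∑ i, (f i - E) ^ 2 := rfl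
  have hV : 0 ≤ V := by rw [hVdef]; positivity
  apply csSup_le
  · refine ⟨_, ⟨fun _ => 1/n, ⟨⟨?_, fun i => by positivity⟩, fun i => ?_⟩, rfl⟩⟩
    · rw [Finset.sum_const, Finset.card_univ, Fintype.card_fin, nsmul_eq_mul]
      field_simp
    · rw [div_le_div_iff₀ hn0 hn0]
      nlinarith
  · rintro x ⟨q, ⟨⟨hsum, hpos⟩, hub⟩, rfl⟩
    set a : Fin n → ℝ := fun i => q i - 1/n with ha
    have hsa : ∑ i, a i = 0 := by
      simp only [ha, Finset.sum_sub_distrib, hsum, Finset.sum_const, Finset.card_univ,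
        Fintype.card_fin, nsmul_eq_mul]
      field_simp
      norm_num
    have key : ∑ i, a i * (f i - E) = (∑ i, q i * f i) - E := by
      have h1 : ∀ i, a i * (f i - E) = q i * f i - (1/(n:ℝ)) * f i - a i * E := by
        intro i; simp only [ha]; ring
      rw [Finset.sum_congr rfl fun i _ => h1 i]
      rw [Finset.sum_sub_distrib, Finset.sum_sub_distrib, ← Finset.mul_sum, ← hEdef,
        ← Finset.sum_mul, hsa, zero_mul, sub_zero]
    -- pointwise quadratic bound
    have hpt : ∀ i, a i ^ 2 ≤ (ε/n - 1/n) * a i + (ε/n) * (1/n) := by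
      intro i
      have h1 : a i ≤ ε / n := by
        have h := hub i
        have hr : (1+ε)/(n:ℝ) = 1/n + ε/n := by ring
        simp only [ha]
        linarith [hr ▸ h]
      have h2 : -(1/(n:ℝ)) ≤ a i := by
        have := hpos i
        simp only [ha]
        linarith
      nlinarith [mul_nonneg (by linarith : (0:ℝ) ≤ ε/n - a i) (by linarith : (0:ℝ) ≤ a i + 1/n)]
    have hsum2 : ∑ i, a i ^ 2 ≤ ε / n := by
      calc ∑ i, a i ^ 2 ≤ ∑ i, ((ε/n - 1/n) * a i + (ε/n) * (1/n)) :=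
            Finset.sum_le_sum fun i _ => hpt i
        _ = (ε/n - 1/n) * (∑ i, a i) + n * ((ε/n) * (1/n)) := by
            rw [Finset.sum_add_distrib, ← Finset.mul_sum, Finset.sum_const, Finset.card_univ,
              Fintype.card_fin, nsmul_eq_mul]
        _ = ε / n := by rw [hsa, mul_zero, zero_add]; field_simp
    have hg : (0:ℝ) ≤ ∑ i, (f i - E) ^ 2 := by positivity
    -- Cauchy–Schwarz
    have hcs : ∑ i, a i * (f i - E) ≤
        Real.sqrt ((∑ i, a i ^ 2) * ∑ i, (f i - E) ^ 2) := by
      have h := Finset.sum_mul_sq_le_sq_mul_sq Finset.univ a (fun i => f i - E)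
      calc ∑ i, a i * (f i - E) ≤ |∑ i, a i * (f i - E)| := le_abs_self _
        _ = Real.sqrt ((∑ i, a i * (f i - E)) ^ 2) := (Real.sqrt_sq_eq_abs _).symm
        _ ≤ _ := Real.sqrt_le_sqrt h
    have hfE : ∑ i, (f i - E) ^ 2 = n * V := by
      rw [hVdef]; field_simp
    have hbound : Real.sqrt ((∑ i, a i ^ 2) * ∑ i, (f i - E) ^ 2)
        ≤ Real.sqrt ε * Real.sqrt V := by
      calc Real.sqrt ((∑ i, a i ^ 2) * ∑ i, (f i - E) ^ 2)
          ≤ Real.sqrt (ε / n * ((n:ℝ) * V)) := by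
            apply Real.sqrt_le_sqrt
            rw [← hfE]
            exact mul_le_mul_of_nonneg_right hsum2 hg
        _ = Real.sqrt (ε * V) := by congr 1; field_simp
        _ = Real.sqrt ε * Real.sqrt V := Real.sqrt_mul hε V
    linarith [key ▸ (hcs.trans hbound)]
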